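/- For every ordinal α, every connected component of X_α intersects both the bottom line B_u and the top line T_u. -/

import Mathlib

open Set Topology

noncomputable section

/-- A set is an `Fσ` set if it is a countable union of closed sets. -/
def IsFSigma {X : Type*} [TopologicalSpace X] (s : Set X) : Prop :=
  ∃ F : ℕ → Set X, (∀ n, IsClosed (F n)) ∧ s = ⋃ n, F n

/-- A topological space is an `F`-space if any two disjoint open `Fσ` subsets
have disjoint closures. -/
def IsFSpace (X : Type*) [TopologicalSpace X] : Prop :=
  ∀ s t : Set X, IsOpen s → IsOpen t → IsFSigma s → IsFSigma t → Disjoint s t →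
    Disjoint (closure s) (closure t)

/-- `𝐒 = ℕ × [0,1]²` where `ℕ` is discrete and `[0,1]` is the unit interval. -/
abbrev bS : Type := ℕ × (unitInterval × unitInterval)

/-- `βπ : β𝐒 → βℕ`, the Stone–Čech extension of the projection `π(n,x,y) = n`. -/
def betaPi : StoneCech bS → StoneCech ℕ :=
  stoneCechExtend (continuous_stoneCechUnit.comp continuous_fst)

/-- `βf : β𝐒 → [0,1]`, the Stone–Čech extension of `f(n,x,y) = x`. -/
def betaF : StoneCech bS → unitInterval :=
  stoneCechExtend (continuous_fst.comp continuous_snd)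

/-- `S_u = βπ⁻¹(u)`, as a subset of `β𝐒` (carrying the subspace topology). -/
def Su (u : StoneCech ℕ) : Set (StoneCech bS) := betaPi ⁻¹' {u}

/-- `f_u : S_u → [0,1]`, the restriction of `βf` to `S_u`. -/
def fu (u : StoneCech ℕ) : (Su u) → unitInterval := fun z => betaF z.1

/-- `L_t = f_u⁻¹(t) ∩ cl_{S_u} f_u⁻¹([0,t))`. -/
def Lset (u : StoneCech ℕ) (t : unitInterval) : Set (Su u) :=
  fu u ⁻¹' {t} ∩ closure (fu u ⁻¹' (Set.Ico 0 t))

/-- `R_t = f_u⁻¹(t) ∩ cl_{S_u} f_u⁻¹((t,1])`. -/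
def Rset (u : StoneCech ℕ) (t : unitInterval) : Set (Su u) :=
  fu u ⁻¹' {t} ∩ closure (fu u ⁻¹' (Set.Ioc t 1))

/-- The rectangle `P_{s,r} = S_u ∩ cl_{β𝐒}(ℕ × [s,r] × I)`, viewed as a subset of `S_u`. -/
def Pset (u : StoneCech ℕ) (s r : unitInterval) : Set (Su u) :=
  Subtype.val ⁻¹' closure (stoneCechUnit '' {p : bS | p.2.1 ∈ Set.Icc s r})

/-- `L_{s,t} = cl_{S_u}(⋃_{s<r<t} P_{s,r})`. -/
def Lst (u : StoneCech ℕ) (s t : unitInterval) : Set (Su u) :=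
  closure (⋃ r ∈ Set.Ioo s t, Pset u s r)

/-- The interior of `B` in the subspace `A`, viewed as a subset of the ambient space. -/
def relInt {Y : Type*} [TopologicalSpace Y] (A B : Set Y) : Set Y :=
  Subtype.val '' interior ((Subtype.val : A → Y) ⁻¹' B)

/-- The transfinite sequence `X_α ⊆ S_u`: `X_0 = S_u`,
`X_{α+1} = X_α \ ⋃_{t} Int_{X_α}(X_α ∩ f_u⁻¹(t))`, and `X_λ = ⋂_{β<λ} X_β` at limits. -/
def Xseq (u : StoneCech ℕ) : Ordinal → Set (Su u) := fun α =>
  Ordinal.limitRecOn α Set.univ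
    (fun _ Xa => Xa \ ⋃ t : unitInterval, relInt Xa (Xa ∩ fu u ⁻¹' {t}))
    (fun o _ ih => ⋂ (β : {β : Ordinal // β < o}), ih β.1 β.2)

/-- The bottom line `B_u = S_u ∩ cl_{β𝐒}(ℕ × I × {0})`, viewed as a subset of `S_u`. -/
def Bu (u : StoneCech ℕ) : Set (Su u) :=
  Subtype.val ⁻¹' closure (stoneCechUnit '' {p : bS | p.2.2 = 0})

/-- The top line `T_u = S_u ∩ cl_{β𝐒}(ℕ × I × {1})`, viewed as a subset of `S_u`. -/
def Tu (u : StoneCech ℕ) : Set (Su u) :=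
  Subtype.val ⁻¹' closure (stoneCechUnit '' {p : bS | p.2.2 = 1})

/-! ### Auxiliary machinery -/

section Generalities

/-- In a compact Hausdorff space, a connected component missing a closed set can be
separated from it by a clopen set. -/
lemma exists_clopen_sep {X : Type*} [TopologicalSpace X] [CompactSpace X] [T2Space X]
    {E : Set X} (hE : IsClosed E) (x : X) (h : connectedComponent x ∩ E = ∅) :
    ∃ K : Set X, IsClopen K ∧ x ∈ K ∧ K ∩ E = ∅ := by
  have h2 : (E ∩ ⋂ (Z : {Z : Set X // IsClopen Z ∧ x ∈ Z}), (Z : Set X)) = ∅ := by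
    rw [connectedComponent_eq_iInter_isClopen] at h
    rw [inter_comm]; exact h
  obtain ⟨t, ht⟩ := hE.isCompact.elim_finite_subfamily_closed _ (fun Z => Z.2.1.1) h2
  refine ⟨⋂ Z ∈ t, (Z : Set X), isClopen_biInter_finset (fun Z _ => Z.2.1), ?_, ?_⟩
  · exact mem_iInter₂.mpr fun Z _ => Z.2.2
  · rw [inter_comm]; exact ht

lemma isClosed_ccIn {X : Type*} [TopologicalSpace X] [T2Space X] {A : Set X}
    (hA : IsCompact A) (x : X) : IsClosed (connectedComponentIn A x) := by
  by_cases hx : x ∈ A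
  · rw [connectedComponentIn_eq_image hx]
    haveI := isCompact_iff_compactSpace.mp hA
    exact ((isClosed_connectedComponent).isCompact.image continuous_subtype_val).isClosed
  · rw [connectedComponentIn_eq_empty hx]; exact isClosed_empty

lemma isPreconnected_iInter_of_directed {X : Type*} [TopologicalSpace X] [CompactSpace X]
    [T2Space X] {ι : Type*} [Nonempty ι] {C : ι → Set X}
    (hd : ∀ i j : ι, ∃ k, C k ⊆ C i ∧ C k ⊆ C j)
    (hcl : ∀ i, IsClosed (C i)) (hco : ∀ i, IsPreconnected (C i)) :
    IsPreconnected (⋂ i, C i) := by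
  rw [isPreconnected_iff_subset_of_fully_disjoint_closed (isClosed_iInter hcl)]
  intro F1 F2 h1 h2 hsub hdisj
  obtain ⟨U, V, hUo, hVo, hF1U, hF2V, hUV⟩ := normal_separation h1 h2 hdisj
  have hex : ∃ i, C i ⊆ U ∪ V := by
    by_contra hno; push_neg at hno
    have hne : ∀ i, (C i ∩ (U ∪ V)ᶜ).Nonempty := by
      intro i
      obtain ⟨z, hz1, hz2⟩ := not_subset.mp (hno i)
      exact ⟨z, hz1, hz2⟩
    have hdir2 : Directed (· ⊇ ·) (fun i => C i ∩ (U ∪ V)ᶜ) := by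
      intro i j
      obtain ⟨k, hk1, hk2⟩ := hd i j
      exact ⟨k, inter_subset_inter_left _ hk1, inter_subset_inter_left _ hk2⟩
    obtain ⟨z, hz⟩ := IsCompact.nonempty_iInter_of_directed_nonempty_isCompact_isClosed _
      hdir2 hne (fun i => ((hcl i).inter (hUo.union hVo).isClosed_compl).isCompact)
      (fun i => (hcl i).inter (hUo.union hVo).isClosed_compl)
    rw [mem_iInter] at hz
    have hz1 : z ∈ ⋂ i, C i := mem_iInter.mpr fun i => (hz i).1
    have hz2 : z ∈ U ∪ V := by
      rcases hsub hz1 with h | h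
      · exact Or.inl (hF1U h)
      · exact Or.inr (hF2V h)
    exact (hz (Classical.arbitrary ι)).2 hz2
  obtain ⟨i, hi⟩ := hex
  have hUorV : C i ⊆ U ∨ C i ⊆ V := by
    rcases (C i ∩ U).eq_empty_or_nonempty with hU' | hU'
    · right; intro z hz
      rcases hi hz with h | h
      · exact absurd (show z ∈ C i ∩ U from ⟨hz, h⟩) (by rw [hU']; exact notMem_empty z)
      · exact h
    rcases (C i ∩ V).eq_empty_or_nonempty with hV' | hV'
    · left; intro z hz
      rcases hi hz with h | h
      · exact h
      · exact absurd (show z ∈ C i ∩ V from ⟨hz, h⟩) (by rw [hV']; exact notMem_empty z)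
    · exfalso
      obtain ⟨p, hp1, hp2⟩ := hco i U V hUo hVo hi hU' hV'
      exact Set.disjoint_left.mp hUV hp2.1 hp2.2
  rcases hUorV with h | h
  · left; intro z hz
    rcases hsub hz with h1' | h2'
    · exact h1'
    · exact absurd (h (iInter_subset C i hz)) fun hU'' =>
        Set.disjoint_left.mp hUV hU'' (hF2V h2') |>.elim
  · right; intro z hz
    rcases hsub hz with h1' | h2'
    · exact absurd (h (iInter_subset C i hz)) fun hV'' =>
        Set.disjoint_left.mp hUV (hF1U h1') hV'' |>.elim
    · exact h2'

lemma diff_image_val {X : Type*} {A : Set X} (S : Set A) :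
    A \ (Subtype.val '' S) = Subtype.val '' Sᶜ := by
  ext z
  constructor
  · rintro ⟨hzA, hz⟩
    exact ⟨⟨z, hzA⟩, fun hS => hz ⟨⟨z, hzA⟩, hS, rfl⟩, rfl⟩
  · rintro ⟨w, hw, rfl⟩
    refine ⟨w.2, ?_⟩
    rintro ⟨w', hw', heq⟩
    exact hw (by rwa [Subtype.val_injective heq] at hw')

lemma relInt_subset_right {Y : Type*} [TopologicalSpace Y] (A B : Set Y) :
    relInt A B ⊆ B := by
  rintro _ ⟨w, hw, rfl⟩
  have hw' : w ∈ (Subtype.val : A → Y) ⁻¹' B := interior_subset hw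
  exact hw'

lemma relInt_subset_left {Y : Type*} [TopologicalSpace Y] (A B : Set Y) :
    relInt A B ⊆ A := by
  rintro _ ⟨w, _, rfl⟩
  exact w.2

end Generalities
section StoneCechFacts

variable (u : StoneCech ℕ)

lemma continuous_betaF : Continuous betaF := continuous_stoneCechExtend _

lemma continuous_betaPi : Continuous betaPi := continuous_stoneCechExtend _

lemma continuous_fu : Continuous (fu u) :=
  (continuous_betaF).comp continuous_subtype_val

lemma continuous_fuR : Continuous (fun z => (fu u z : ℝ)) :=
  continuous_subtype_val.comp (continuous_fu u)

lemma betaF_unit (p : bS) : betaF (stoneCechUnit p) = p.2.1 :=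
  congrFun (stoneCechExtend_extends _) p

lemma betaPi_unit (p : bS) : betaPi (stoneCechUnit p) = stoneCechUnit p.1 :=
  congrFun (stoneCechExtend_extends _) p

lemma betaF_mem_of_closure {A : Set bS} {Tset : Set unitInterval} (hT : IsClosed Tset)
    (hA : ∀ p ∈ A, p.2.1 ∈ Tset) {z : StoneCech bS} (hz : z ∈ closure (stoneCechUnit '' A)) :
    betaF z ∈ Tset := by
  have h : betaF z ∈ closure Tset := by
    apply map_mem_closure continuous_betaF hz
    rintro _ ⟨p, hp, rfl⟩
    rw [betaF_unit]
    exact hA p hp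
  rwa [hT.closure_eq] at h

lemma exists_su_mem_closure {A : Set bS} (hA : ∀ n : ℕ, ∃ p ∈ A, p.1 = n) :
    ∃ z : Su u, (z : StoneCech bS) ∈ closure (stoneCechUnit '' A) := by
  have hKc : IsCompact (closure (stoneCechUnit '' A)) := isClosed_closure.isCompact
  have h1 : Set.range (stoneCechUnit : ℕ → StoneCech ℕ) ⊆ betaPi '' closure (stoneCechUnit '' A) := by
    rintro _ ⟨n, rfl⟩
    obtain ⟨p, hp, hpn⟩ := hA n
    exact ⟨stoneCechUnit p, subset_closure (mem_image_of_mem _ hp), by rw [betaPi_unit, hpn]⟩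
  have hcl : IsClosed (betaPi '' closure (stoneCechUnit '' A)) :=
    (hKc.image continuous_betaPi).isClosed
  have h2 : u ∈ betaPi '' closure (stoneCechUnit '' A) := by
    have huniv : (univ : Set (StoneCech ℕ)) ⊆ betaPi '' closure (stoneCechUnit '' A) := by
      rw [← denseRange_stoneCechUnit.closure_range]
      exact closure_minimal h1 hcl
    exact huniv (mem_univ u)
  obtain ⟨z, hz, hzu⟩ := h2
  exact ⟨⟨z, mem_singleton_iff.mpr hzu⟩, hz⟩

lemma Pset_inter_edge_nonempty (a b : unitInterval) (hab : a ≤ b) (y0 : unitInterval) :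
    (Pset u a b ∩ (Subtype.val ⁻¹' closure (stoneCechUnit '' {p : bS | p.2.2 = y0}))).Nonempty := by
  obtain ⟨z, hz⟩ := exists_su_mem_closure u
    (A := {p : bS | p.2.1 ∈ Set.Icc a b ∧ p.2.2 = y0})
    (fun n => ⟨(n, a, y0), ⟨⟨le_rfl, hab⟩, rfl⟩, rfl⟩)
  refine ⟨z, ?_, ?_⟩
  · show (z : StoneCech bS) ∈ closure (stoneCechUnit '' {p : bS | p.2.1 ∈ Set.Icc a b})
    exact closure_mono (image_mono (fun p hp => hp.1)) hz
  · show (z : StoneCech bS) ∈ closure (stoneCechUnit '' {p : bS | p.2.2 = y0})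
    exact closure_mono (image_mono (fun p hp => hp.2)) hz

lemma mem_Pset_of {z : Su u} {a b : unitInterval} (h1 : a ≤ fu u z) (h2 : fu u z ≤ b)
    (h3 : a = 0 ∨ a < fu u z) (h4 : b = 1 ∨ fu u z < b) : z ∈ Pset u a b := by
  have hcover : (z : StoneCech bS) ∈
      closure (stoneCechUnit '' {p : bS | p.2.1 ∈ Set.Icc 0 a}) ∪
      (closure (stoneCechUnit '' {p : bS | p.2.1 ∈ Set.Icc a b}) ∪
       closure (stoneCechUnit '' {p : bS | p.2.1 ∈ Set.Icc b 1})) := by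
    rw [← closure_union, ← closure_union, ← image_union, ← image_union]
    have hU : ({p : bS | p.2.1 ∈ Set.Icc 0 a} ∪
        ({p : bS | p.2.1 ∈ Set.Icc a b} ∪ {p : bS | p.2.1 ∈ Set.Icc b 1})) = univ := by
      ext p
      simp only [Set.mem_union, Set.mem_setOf_eq, Set.mem_univ, iff_true]
      rcases le_total p.2.1 a with h | h
      · exact Or.inl ⟨p.2.1.2.1, h⟩
      · rcases le_total p.2.1 b with h' | h'
        · exact Or.inr (Or.inl ⟨h, h'⟩)
        · exact Or.inr (Or.inr ⟨h', p.2.1.2.2⟩)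
    rw [hU, image_univ, denseRange_stoneCechUnit.closure_range]
    exact mem_univ _
  rcases hcover with hlow | hmid | hhigh
  · have hle : (betaF (z : StoneCech bS) : ℝ) ≤ (a : ℝ) := by
      have := betaF_mem_of_closure (Tset := {t : unitInterval | (t : ℝ) ≤ (a : ℝ)})
        (by
          have : {t : unitInterval | (t : ℝ) ≤ (a : ℝ)} =
              (fun t : unitInterval => (t : ℝ)) ⁻¹' (Set.Iic (a : ℝ)) := rfl
          rw [this]
          exact isClosed_Iic.preimage continuous_subtype_val)
        (fun p hp => Subtype.coe_le_coe.mpr hp.2) hlow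
      exact this
    rcases h3 with rfl | hlt
    · show (z : StoneCech bS) ∈ closure (stoneCechUnit '' {p : bS | p.2.1 ∈ Set.Icc 0 b})
      refine closure_mono (image_mono ?_) hlow
      intro p hp
      exact ⟨hp.1, le_trans hp.2 (le_trans h1 h2)⟩
    · exact absurd (Subtype.coe_le_coe.mpr (show fu u z ≤ a from Subtype.coe_le_coe.mp hle))
        (not_le.mpr (Subtype.coe_lt_coe.mpr hlt))
  · exact hmid
  · have hge : (b : ℝ) ≤ (betaF (z : StoneCech bS) : ℝ) := by
      have := betaF_mem_of_closure (Tset := {t : unitInterval | (b : ℝ) ≤ (t : ℝ)})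
        (by
          have : {t : unitInterval | (b : ℝ) ≤ (t : ℝ)} =
              (fun t : unitInterval => (t : ℝ)) ⁻¹' (Set.Ici (b : ℝ)) := rfl
          rw [this]
          exact isClosed_Ici.preimage continuous_subtype_val)
        (fun p hp => Subtype.coe_le_coe.mpr hp.1) hhigh
      exact this
    rcases h4 with rfl | hlt
    · show (z : StoneCech bS) ∈ closure (stoneCechUnit '' {p : bS | p.2.1 ∈ Set.Icc a 1})
      refine closure_mono (image_mono ?_) hhigh
      intro p hp
      exact ⟨le_trans (le_trans h1 h2) hp.1, hp.2⟩
    · exact absurd (show b ≤ fu u z from Subtype.coe_le_coe.mp hge)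
        (not_le.mpr hlt)

lemma Pset_band {a b : unitInterval} {z : Su u} (hz : z ∈ Pset u a b) :
    (a : ℝ) ≤ (fu u z : ℝ) ∧ (fu u z : ℝ) ≤ (b : ℝ) := by
  have := betaF_mem_of_closure (Tset := {t : unitInterval | (a : ℝ) ≤ (t : ℝ) ∧ (t : ℝ) ≤ (b : ℝ)})
    (by
      have : {t : unitInterval | (a : ℝ) ≤ (t : ℝ) ∧ (t : ℝ) ≤ (b : ℝ)} =
          (fun t : unitInterval => (t : ℝ)) ⁻¹' (Set.Icc (a : ℝ) (b : ℝ)) := rfl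
      rw [this]
      exact isClosed_Icc.preimage continuous_subtype_val)
    (fun p hp => ⟨Subtype.coe_le_coe.mpr hp.1, Subtype.coe_le_coe.mpr hp.2⟩) hz
  exact this

lemma Pset_mono {a a' b b' : unitInterval} (ha : a' ≤ a) (hb : b ≤ b') :
    Pset u a b ⊆ Pset u a' b' :=
  preimage_mono (closure_mono (image_mono (fun p hp => ⟨le_trans ha hp.1, le_trans hp.2 hb⟩)))

end StoneCechFacts
/-! ### The strips `F_{c,d}` -/

/-- The open subinterval of `[0,1]` cut out by the real interval `(c,d)`. -/
def Jset (c d : ℝ) : Set unitInterval := {t : unitInterval | c < (t : ℝ) ∧ (t : ℝ) < d}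

/-- The closed strip `cl(f_u⁻¹(J_{c,d}))` in `S_u`. -/
def Fcd (u : StoneCech ℕ) (c d : ℝ) : Set (Su u) := closure (fu u ⁻¹' Jset c d)

section FcdFacts

variable (u : StoneCech ℕ)

lemma Jset_mono {c c' d d' : ℝ} (hc : c ≤ c') (hd : d' ≤ d) : Jset c' d' ⊆ Jset c d :=
  fun t ht => ⟨lt_of_le_of_lt hc ht.1, lt_of_lt_of_le ht.2 hd⟩

lemma Fcd_mono {c c' d d' : ℝ} (hc : c ≤ c') (hd : d' ≤ d) : Fcd u c' d' ⊆ Fcd u c d :=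
  closure_mono (preimage_mono (Jset_mono hc hd))

lemma isClosed_Fcd (c d : ℝ) : IsClosed (Fcd u c d) := isClosed_closure

lemma isOpen_Jset_pre (c d : ℝ) : IsOpen (fu u ⁻¹' Jset c d) := by
  have h : Jset c d = (fun t : unitInterval => (t : ℝ)) ⁻¹' (Set.Ioo c d) := rfl
  rw [Jset] at h
  rw [show (fu u ⁻¹' Jset c d) = (fun z => (fu u z : ℝ)) ⁻¹' (Set.Ioo c d) from rfl]
  exact isOpen_Ioo.preimage (continuous_fuR u)

lemma isOpen_lt_pre (c : ℝ) : IsOpen (fu u ⁻¹' {t : unitInterval | (t : ℝ) < c}) := by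
  rw [show (fu u ⁻¹' {t : unitInterval | (t : ℝ) < c}) =
    (fun z => (fu u z : ℝ)) ⁻¹' (Set.Iio c) from rfl]
  exact isOpen_Iio.preimage (continuous_fuR u)

lemma isOpen_gt_pre (d : ℝ) : IsOpen (fu u ⁻¹' {t : unitInterval | d < (t : ℝ)}) := by
  rw [show (fu u ⁻¹' {t : unitInterval | d < (t : ℝ)}) =
    (fun z => (fu u z : ℝ)) ⁻¹' (Set.Ioi d) from rfl]
  exact isOpen_Ioi.preimage (continuous_fuR u)

lemma isFSigma_Jset_pre (c d : ℝ) : IsFSigma (fu u ⁻¹' Jset c d) := by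
  refine ⟨fun n => (fun z => (fu u z : ℝ)) ⁻¹' (Set.Icc (c + 1 / (n + 1)) (d - 1 / (n + 1))),
    fun n => isClosed_Icc.preimage (continuous_fuR u), ?_⟩
  ext z
  simp only [Set.mem_iUnion, Set.mem_preimage, Set.mem_Icc, Jset, Set.mem_setOf_eq]
  constructor
  · rintro ⟨h1, h2⟩
    obtain ⟨n, hn⟩ := exists_nat_one_div_lt (lt_min (sub_pos.mpr h1) (sub_pos.mpr h2))
    rw [lt_min_iff] at hn
    exact ⟨n, by linarith [hn.1], by linarith [hn.2]⟩
  · rintro ⟨n, hn1, hn2⟩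
    have hpos : (0 : ℝ) < 1 / (n + 1) := by positivity
    constructor <;> linarith

lemma isFSigma_lt_pre (c : ℝ) : IsFSigma (fu u ⁻¹' {t : unitInterval | (t : ℝ) < c}) := by
  refine ⟨fun n => (fun z => (fu u z : ℝ)) ⁻¹' (Set.Iic (c - 1 / (n + 1))),
    fun n => isClosed_Iic.preimage (continuous_fuR u), ?_⟩
  ext z
  simp only [Set.mem_iUnion, Set.mem_preimage, Set.mem_Iic, Set.mem_setOf_eq]
  constructor
  · intro h
    obtain ⟨n, hn⟩ := exists_nat_one_div_lt (sub_pos.mpr h)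
    exact ⟨n, by linarith⟩
  · rintro ⟨n, hn⟩
    have hpos : (0 : ℝ) < 1 / (n + 1) := by positivity
    linarith

lemma isFSigma_gt_pre (d : ℝ) : IsFSigma (fu u ⁻¹' {t : unitInterval | d < (t : ℝ)}) := by
  refine ⟨fun n => (fun z => (fu u z : ℝ)) ⁻¹' (Set.Ici (d + 1 / (n + 1))),
    fun n => isClosed_Ici.preimage (continuous_fuR u), ?_⟩
  ext z
  simp only [Set.mem_iUnion, Set.mem_preimage, Set.mem_Ici, Set.mem_setOf_eq]
  constructor
  · intro h
    obtain ⟨n, hn⟩ := exists_nat_one_div_lt (sub_pos.mpr h)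
    exact ⟨n, by linarith⟩
  · rintro ⟨n, hn⟩
    have hpos : (0 : ℝ) < 1 / (n + 1) := by positivity
    linarith

lemma Fcd_band {c d : ℝ} {z : Su u} (hz : z ∈ Fcd u c d) :
    c ≤ (fu u z : ℝ) ∧ (fu u z : ℝ) ≤ d := by
  have hcl : IsClosed {w : Su u | c ≤ (fu u w : ℝ) ∧ (fu u w : ℝ) ≤ d} := by
    rw [show {w : Su u | c ≤ (fu u w : ℝ) ∧ (fu u w : ℝ) ≤ d} =
      (fun w => (fu u w : ℝ)) ⁻¹' (Set.Icc c d) from rfl]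
    exact isClosed_Icc.preimage (continuous_fuR u)
  refine closure_minimal ?_ hcl hz
  intro w hw
  exact ⟨hw.1.le, hw.2.le⟩

end FcdFacts
section FcdConn

variable (u : StoneCech ℕ)

/-- Clamp a real number into the unit interval. -/
def clampI (x : ℝ) : unitInterval := Set.projIcc 0 1 zero_le_one x

lemma clampI_coe (x : ℝ) : (clampI x : ℝ) = max 0 (min 1 x) := rfl

lemma clampI_mono : Monotone clampI := Set.monotone_projIcc zero_le_one

/-- Under the nontriviality assumption on `(c,d)`, the strip preimage is the union of a
directed family of connected `P`-rectangles; this gives connectedness of `F_{c,d}` and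
supplies a rectangle inside the strip. -/
lemma Fcd_conn_aux (hP : ∀ s r : unitInterval, s < r → IsConnected (Pset u s r))
    {c d : ℝ} (hm : max c 0 < min d 1) :
    IsPreconnected (Fcd u c d) ∧ ∃ a b : unitInterval, a < b ∧ Pset u a b ⊆ fu u ⁻¹' Jset c d := by
  set mc := max c 0 with hmc
  set md := min d 1 with hmd
  have hmc0 : (0 : ℝ) ≤ mc := le_max_right c 0
  have hmd1 : md ≤ 1 := min_le_right d 1
  have hcmc : c ≤ mc := le_max_left c 0
  have hmdd : md ≤ d := min_le_left d 1
  set ε₀ : ℝ := (md - mc) / 3 with hε₀def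
  have hε₀ : 0 < ε₀ := by
    simp only [hε₀def]
    linarith [hm]
  -- basic estimates for the clamped endpoints
  have hkey : ∀ ε : ℝ, 0 < ε → ε ≤ ε₀ →
      c < (clampI (c + ε) : ℝ) ∧ ((clampI (d - ε)) : ℝ) < d ∧
      clampI (c + ε) < clampI (d - ε) := by
    intro ε hε hεε₀
    have h1 : c + ε ≤ mc + ε₀ := by linarith
    have h2 : mc + ε₀ < md := by simp only [hε₀def]; linarith [hm]
    have h3 : md - ε₀ ≤ d - ε := by linarith
    have h4 : mc < md - ε₀ := by simp only [hε₀def]; linarith [hm]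
    have hca : (clampI (c + ε) : ℝ) = max 0 (min 1 (c + ε)) := rfl
    have hcb : (clampI (d - ε) : ℝ) = max 0 (min 1 (d - ε)) := rfl
    have hmin1 : min 1 (c + ε) = c + ε ∨ c + ε > 1 := by
      rcases le_or_gt (c + ε) 1 with h | h
      · exact Or.inl (min_eq_right h)
      · exact Or.inr h
    have hA_ge : c < (clampI (c + ε) : ℝ) := by
      rw [hca]
      have hle1 : c + ε ≤ 1 := by linarith
      rw [min_eq_right hle1]
      have : c + ε ≤ max 0 (c + ε) := le_max_right _ _
      linarith [le_max_right (0:ℝ) (c+ε)]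
    have hA_le : (clampI (c + ε) : ℝ) ≤ mc + ε := by
      rw [hca]
      have hle1 : c + ε ≤ 1 := by linarith
      rw [min_eq_right hle1]
      exact max_le (by linarith) (by linarith)
    have hB_le : (clampI (d - ε) : ℝ) < d := by
      rw [hcb]
      have hpos : 0 < d - ε := by linarith
      apply max_lt (by linarith)
      exact lt_of_le_of_lt (min_le_right _ _) (by linarith)
    have hB_ge : md - ε ≤ (clampI (d - ε) : ℝ) := by
      rw [hcb]
      have h5 : md - ε ≤ min 1 (d - ε) := le_min (by linarith) (by linarith)
      exact le_trans h5 (le_max_right _ _)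
    refine ⟨hA_ge, hB_le, ?_⟩
    rw [← Subtype.coe_lt_coe]
    have : mc + ε < md - ε := by
      simp only [hε₀def] at hεε₀ ⊢
      linarith
    linarith
  obtain ⟨hA0, hB0, hab0⟩ := hkey ε₀ hε₀ le_rfl
  set a0 := clampI (c + ε₀) with ha0
  set b0 := clampI (d - ε₀) with hb0
  have hPJ : ∀ ε : ℝ, 0 < ε → ε ≤ ε₀ →
      Pset u (clampI (c + ε)) (clampI (d - ε)) ⊆ fu u ⁻¹' Jset c d := by
    intro ε hε hεε₀ z hz
    obtain ⟨hz1, hz2⟩ := Pset_band u hz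
    obtain ⟨hA, hB, _⟩ := hkey ε hε hεε₀
    exact ⟨lt_of_lt_of_le hA hz1, lt_of_le_of_lt hz2 hB⟩
  obtain ⟨x0, hx0⟩ := (hP a0 b0 hab0).nonempty
  have hsub0 : ∀ ε : ℝ, 0 < ε → ε ≤ ε₀ →
      Pset u a0 b0 ⊆ Pset u (clampI (c + ε)) (clampI (d - ε)) := by
    intro ε hε hεε₀
    exact Pset_mono u (clampI_mono (by linarith)) (clampI_mono (by linarith))
  have hUnion : fu u ⁻¹' Jset c d =
      ⋃₀ {S : Set (Su u) | ∃ ε : ℝ, 0 < ε ∧ ε ≤ ε₀ ∧ S = Pset u (clampI (c + ε)) (clampI (d - ε))} := by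
    apply Set.Subset.antisymm
    · intro z hz
      obtain ⟨hz1, hz2⟩ := hz
      set e : ℝ := (fu u z : ℝ) with he
      have he0 : 0 ≤ e := (fu u z).2.1
      have he1 : e ≤ 1 := (fu u z).2.2
      set ε : ℝ := min ε₀ (min (e - c) (d - e)) / 2 with hεdef
      have hε : 0 < ε := by
        simp only [hεdef]
        have : 0 < min ε₀ (min (e - c) (d - e)) :=
          lt_min hε₀ (lt_min (by linarith) (by linarith))
        linarith
      have hεε₀ : ε ≤ ε₀ := by
        simp only [hεdef]
        have h := min_le_left ε₀ (min (e - c) (d - e))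
        linarith
      have hεec : ε < e - c := by
        simp only [hεdef]
        have h := (min_le_right ε₀ (min (e - c) (d - e))).trans (min_le_left _ _)
        have : (0:ℝ) < e - c := by linarith
        linarith
      have hεde : ε < d - e := by
        simp only [hεdef]
        have h := (min_le_right ε₀ (min (e - c) (d - e))).trans (min_le_right _ _)
        have : (0:ℝ) < d - e := by linarith
        linarith
      refine Set.mem_sUnion.mpr ⟨Pset u (clampI (c + ε)) (clampI (d - ε)), ⟨ε, hε, hεε₀, rfl⟩, ?_⟩
      apply mem_Pset_of u
      · rw [← Subtype.coe_le_coe, clampI_coe]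
        exact max_le he0 (le_trans (min_le_right _ _) (by linarith))
      · rw [← Subtype.coe_le_coe, clampI_coe]
        refine le_max_of_le_right (le_min he1 (by linarith))
      · rcases le_or_gt (c + ε) 0 with h | h
        · left
          apply Subtype.ext
          rw [clampI_coe]
          have : min 1 (c + ε) ≤ 0 := le_trans (min_le_right _ _) h
          simp [max_eq_left this]
        · right
          rw [← Subtype.coe_lt_coe, clampI_coe]
          have hle1 : c + ε ≤ 1 := by linarith
          rw [min_eq_right hle1, max_eq_right h.le]
          linarith
      · rcases le_or_gt 1 (d - ε) with h | h
        · left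
          apply Subtype.ext
          rw [clampI_coe]
          rw [min_eq_left h]
          simp
        · right
          rw [← Subtype.coe_lt_coe, clampI_coe]
          rw [min_eq_right h.le]
          have : 0 < d - ε := by linarith
          rw [max_eq_right this.le]
          linarith
    · intro z hz
      obtain ⟨S, ⟨ε, hε, hεε₀, rfl⟩, hzS⟩ := hz
      exact hPJ ε hε hεε₀ hzS
  have hpre : IsPreconnected (fu u ⁻¹' Jset c d) := by
    rw [hUnion]
    apply isPreconnected_sUnion x0
    · rintro S ⟨ε, hε, hεε₀, rfl⟩
      exact hsub0 ε hε hεε₀ hx0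
    · rintro S ⟨ε, hε, hεε₀, rfl⟩
      have hab : clampI (c + ε) < clampI (d - ε) := (hkey ε hε hεε₀).2.2
      exact (hP _ _ hab).isPreconnected
  exact ⟨hpre.closure, a0, b0, hab0, hPJ ε₀ hε₀ le_rfl⟩

end FcdConn
section XseqFacts

variable (u : StoneCech ℕ)

lemma Xseq_zero : Xseq u 0 = univ := by
  rw [Xseq, Ordinal.limitRecOn_zero]

lemma Xseq_succ (α : Ordinal) :
    Xseq u (Order.succ α) =
      Xseq u α \ ⋃ t : unitInterval, relInt (Xseq u α) (Xseq u α ∩ fu u ⁻¹' {t}) := by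
  rw [Xseq, Ordinal.limitRecOn_succ]
  rfl

lemma Xseq_limit {α : Ordinal} (h : Order.IsSuccLimit α) :
    Xseq u α = ⋂ (β : {β : Ordinal // β < α}), Xseq u β.1 := by
  rw [Xseq, Ordinal.limitRecOn_limit _ _ _ _ h]
  rfl

lemma Xseq_antitone : ∀ α β : Ordinal, β ≤ α → Xseq u α ⊆ Xseq u β := by
  intro α
  induction α using Ordinal.induction with
  | h α IH =>
    intro β hβ
    rcases Ordinal.zero_or_succ_or_isSuccLimit α with rfl | ⟨γ, rfl⟩ | hlim
    · rw [nonpos_iff_eq_zero] at hβ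
      subst hβ
      exact subset_rfl
    · rcases Order.le_succ_iff_eq_or_le.mp hβ with rfl | hle
      · exact subset_rfl
      · refine subset_trans ?_ (IH γ (Order.lt_succ γ) β hle)
        rw [Xseq_succ]
        exact diff_subset
    · rcases eq_or_lt_of_le hβ with rfl | hlt
      · exact subset_rfl
      · rw [Xseq_limit u hlim]
        exact iInter_subset (fun β : {β : Ordinal // β < α} => Xseq u β.1) ⟨β, hlt⟩

lemma Xseq_closed (hcomp : IsCompact (Su u)) : ∀ α : Ordinal, IsClosed (Xseq u α) := by
  haveI : CompactSpace (Su u) := isCompact_iff_compactSpace.mp hcomp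
  intro α
  induction α using Ordinal.induction with
  | h α IH =>
    rcases Ordinal.zero_or_succ_or_isSuccLimit α with rfl | ⟨γ, rfl⟩ | hlim
    · rw [Xseq_zero]
      exact isClosed_univ
    · rw [Xseq_succ]
      have hY : IsClosed (Xseq u γ) := IH γ (Order.lt_succ γ)
      haveI : CompactSpace (Xseq u γ) := isCompact_iff_compactSpace.mp hY.isCompact
      have him : (⋃ t : unitInterval, relInt (Xseq u γ) (Xseq u γ ∩ fu u ⁻¹' {t})) =
          Subtype.val '' (⋃ t : unitInterval,
            interior ((Subtype.val : Xseq u γ → Su u) ⁻¹' (Xseq u γ ∩ fu u ⁻¹' {t}))) := by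
        rw [image_iUnion]
        rfl
      rw [him, diff_image_val]
      apply IsCompact.isClosed
      apply IsCompact.image ?_ continuous_subtype_val
      apply IsClosed.isCompact
      rw [isClosed_compl_iff]
      exact isOpen_iUnion (fun t => isOpen_interior)
    · rw [Xseq_limit u hlim]
      exact isClosed_iInter (fun β => IH β.1 β.2)

/-- A point of `X_{α+1}` is approached within `X_α` from below or above its own `f_u`-level. -/
lemma approx_of_mem_succ {Y : Set (Su u)} {x : Su u} (hxY : x ∈ Y)
    (hx : x ∉ relInt Y (Y ∩ fu u ⁻¹' {fu u x})) :
    x ∈ closure (Y ∩ fu u ⁻¹' (Set.Iio (fu u x))) ∪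
        closure (Y ∩ fu u ⁻¹' (Set.Ioi (fu u x))) := by
  set τ := fu u x with hτ
  set S : Set (Y : Set (Su u)) := (Subtype.val : Y → Su u) ⁻¹' (Y ∩ fu u ⁻¹' {τ}) with hS
  have h1 : (⟨x, hxY⟩ : Y) ∈ closure Sᶜ := by
    rw [closure_compl]
    intro hint
    exact hx ⟨⟨x, hxY⟩, hint, rfl⟩
  have h2 : x ∈ closure (Subtype.val '' Sᶜ) :=
    image_closure_subset_closure_image continuous_subtype_val ⟨⟨x, hxY⟩, h1, rfl⟩
  have h3 : Subtype.val '' Sᶜ ⊆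
      (Y ∩ fu u ⁻¹' (Set.Iio τ)) ∪ (Y ∩ fu u ⁻¹' (Set.Ioi τ)) := by
    rintro _ ⟨w, hw, rfl⟩
    have hwY : (w : Su u) ∈ Y := w.2
    have hwτ : fu u (w : Su u) ≠ τ := by
      intro heq
      exact hw ⟨hwY, heq⟩
    rcases lt_or_gt_of_ne hwτ with h | h
    · exact Or.inl ⟨hwY, h⟩
    · exact Or.inr ⟨hwY, h⟩
  have := closure_mono h3 h2
  rwa [closure_union] at this

end XseqFacts
section MainLemma

lemma main_lemma (u : StoneCech ℕ) (hcomp : IsCompact (Su u))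
    (hFsp : IsFSpace (Su u))
    (hP : ∀ s r : unitInterval, s < r → IsConnected (Pset u s r))
    (E : Set (Su u)) (hEc : IsClosed E)
    (hEP : ∀ a b : unitInterval, a ≤ b → (Pset u a b ∩ E).Nonempty) :
    ∀ α : Ordinal, ∀ c d : ℝ, max c 0 < min d 1 → ∀ x : Su u,
      x ∈ Xseq u α → x ∈ Fcd u c d →
      (connectedComponentIn (Xseq u α ∩ Fcd u c d) x ∩ E).Nonempty := by
  haveI : CompactSpace (Su u) := isCompact_iff_compactSpace.mp hcomp
  intro α
  induction α using Ordinal.induction with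
  | h α IH =>
  intro c d hm x hxX hxF
  rcases Ordinal.zero_or_succ_or_isSuccLimit α with rfl | ⟨γ, rfl⟩ | hlim
  · -- zero case
    rw [Xseq_zero, univ_inter]
    obtain ⟨hFpre, a, b, hab, hPJ⟩ := Fcd_conn_aux u hP hm
    obtain ⟨w, hwP, hwE⟩ := hEP a b hab.le
    have hwF : w ∈ Fcd u c d := subset_closure (hPJ hwP)
    have hsub : Fcd u c d ⊆ connectedComponentIn (Fcd u c d) x :=
      hFpre.subset_connectedComponentIn hxF subset_rfl
    exact ⟨w, hsub hwF, hwE⟩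
  · -- successor case
    set Y := Xseq u γ with hYdef
    have hYcl : IsClosed Y := Xseq_closed u hcomp γ
    have hFcl : IsClosed (Fcd u c d) := isClosed_Fcd u c d
    have hZcl : IsClosed (Xseq u (Order.succ γ)) := Xseq_closed u hcomp _
    have hxY : x ∈ Y := Xseq_antitone u _ γ (Order.le_succ γ) hxX
    by_contra hcon
    rw [not_nonempty_iff_eq_empty] at hcon
    set A := Xseq u (Order.succ γ) ∩ Fcd u c d with hAdef
    have hAcl : IsClosed A := hZcl.inter hFcl
    have hxA : x ∈ A := ⟨hxX, hxF⟩
    haveI : CompactSpace A := isCompact_iff_compactSpace.mp hAcl.isCompact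
    have hccE : connectedComponent (⟨x, hxA⟩ : A) ∩ (Subtype.val ⁻¹' E) = ∅ := by
      rw [eq_empty_iff_forall_notMem]
      rintro w ⟨hw1, hw2⟩
      have hmem : (w : Su u) ∈ connectedComponentIn A x ∩ E := by
        constructor
        · rw [connectedComponentIn_eq_image hxA]
          exact mem_image_of_mem _ hw1
        · exact hw2
      rw [hcon] at hmem
      exact hmem
    obtain ⟨Kt, hKt_clopen, hxKt, hKtE⟩ := exists_clopen_sep
      (hEc.preimage continuous_subtype_val) (⟨x, hxA⟩ : A) hccE
    set K0 : Set (Su u) := Subtype.val '' Kt with hK0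
    set K0' : Set (Su u) := Subtype.val '' Ktᶜ with hK0'
    have hK0cpt : IsCompact K0 := (hKt_clopen.1.isCompact).image continuous_subtype_val
    have hK0'cpt : IsCompact K0' := (hKt_clopen.compl.1.isCompact).image continuous_subtype_val
    have hK0union : K0 ∪ K0' = A := by
      rw [hK0, hK0', ← image_union, union_compl_self, image_univ, Subtype.range_coe]
    have hdisj1 : Disjoint K0 K0' := by
      rw [Set.disjoint_left]
      rintro z ⟨w, hw, rfl⟩ ⟨w', hw', heq⟩
      rw [Subtype.val_injective heq] at hw'
      exact hw' hw
    have hdisj2 : Disjoint K0 E := by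
      rw [Set.disjoint_left]
      rintro z ⟨w, hw, rfl⟩ hzE
      have hmem : w ∈ Kt ∩ (Subtype.val ⁻¹' E) := ⟨hw, hzE⟩
      rw [hKtE] at hmem
      exact hmem
    obtain ⟨V, W, hVo, hWo, hKV, hKEW, hVW⟩ :=
      SeparatedNhds.of_isCompact_isCompact hK0cpt (hK0'cpt.union hEc.isCompact)
        (disjoint_union_right.mpr ⟨hdisj1, hdisj2⟩)
    have hEW : E ⊆ W := subset_trans subset_union_right hKEW
    have hK0'W : K0' ⊆ W := subset_trans subset_union_left hKEW
    have hxV : x ∈ V := hKV (mem_image_of_mem _ hxKt)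
    haveI : CompactSpace Y := isCompact_iff_compactSpace.mp hYcl.isCompact
    set D := (Y ∩ Fcd u c d) \ (V ∪ W) with hD
    have hDcl : IsClosed D := (hYcl.inter hFcl).sdiff (hVo.union hWo)
    have hDrel : ∀ z ∈ D, z ∈ ⋃ t : unitInterval, relInt Y (Y ∩ fu u ⁻¹' {t}) := by
      intro z hz
      have hzA : z ∉ A := by
        intro hzA
        have hmem : z ∈ K0 ∪ K0' := by rw [hK0union]; exact hzA
        rcases hmem with h | h
        · exact hz.2 (Or.inl (hKV h))
        · exact hz.2 (Or.inr (hK0'W h))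
      have hzY : z ∈ Y := hz.1.1
      by_contra hno
      apply hzA
      refine ⟨?_, hz.1.2⟩
      rw [Xseq_succ]
      exact ⟨hzY, hno⟩
    obtain ⟨T, hT⟩ : ∃ T : Finset unitInterval, ∀ z ∈ D,
        ∃ t ∈ T, z ∈ relInt Y (Y ∩ fu u ⁻¹' {t}) := by
      have hDscpt : IsCompact ((Subtype.val : Y → Su u) ⁻¹' D) :=
        (hDcl.preimage continuous_subtype_val).isCompact
      have hcov : (Subtype.val : Y → Su u) ⁻¹' D ⊆
          ⋃ t : unitInterval, interior ((Subtype.val : Y → Su u) ⁻¹' (Y ∩ fu u ⁻¹' {t})) := by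
        intro w hw
        obtain ⟨t, ht⟩ := mem_iUnion.mp (hDrel (w : Su u) hw)
        obtain ⟨w', hw', heq⟩ := ht
        rw [mem_iUnion]
        exact ⟨t, by rwa [Subtype.val_injective heq] at hw'⟩
      obtain ⟨T, hT⟩ := hDscpt.elim_finite_subcover _ (fun t => isOpen_interior) hcov
      refine ⟨T, fun z hz => ?_⟩
      have hzY : z ∈ Y := hz.1.1
      obtain ⟨t, htT, hint⟩ := mem_iUnion₂.mp (hT (show (⟨z, hzY⟩ : Y) ∈ _ from hz))
      exact ⟨t, htT, mem_image_of_mem _ hint⟩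
    have hcover : ∀ z ∈ Y ∩ Fcd u c d,
        z ∈ V ∪ W ∨ ∃ t ∈ T, z ∈ relInt Y (Y ∩ fu u ⁻¹' {t}) := by
      intro z hz
      by_cases h : z ∈ V ∪ W
      · exact Or.inl h
      · exact Or.inr (hT z ⟨hz, h⟩)
    set τ := fu u x with hτ
    have hband := Fcd_band u hxF
    classical
    -- key: a point of `V ∩ Y` whose level avoids `T ∪ {c, d}` leads to a contradiction
    have key : ∀ z : Su u, z ∈ V → z ∈ Y → fu u z ∉ T →
        c < (fu u z : ℝ) → (fu u z : ℝ) < d → False := by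
      intro z hzV hzY hzT hc1 hc2
      set e : ℝ := (fu u z : ℝ) with he
      set S : Finset ℝ := insert c (insert d (T.image (fun t : unitInterval => (t : ℝ))))
        with hSdef
      have hSne : S.Nonempty := ⟨c, by simp [hSdef]⟩
      set δ : ℝ := S.inf' hSne (fun s => |e - s|) with hδdef
      have hδle : ∀ s ∈ S, δ ≤ |e - s| := fun s hs => Finset.inf'_le _ hs
      have hδpos : 0 < δ := by
        rw [hδdef, Finset.lt_inf'_iff]
        intro s hs
        rw [abs_pos, sub_ne_zero]
        simp only [hSdef, Finset.mem_insert, Finset.mem_image] at hs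
        rcases hs with rfl | rfl | ⟨t, htT, rfl⟩
        · exact ne_of_gt hc1
        · exact ne_of_lt hc2
        · intro heq
          exact hzT (by rwa [show t = fu u z from Subtype.coe_injective heq.symm] at htT)
      have hδc : δ ≤ e - c := by
        have h := hδle c (by simp [hSdef])
        rwa [abs_of_pos (by linarith)] at h
      have hδd : δ ≤ d - e := by
        have h := hδle d (by simp [hSdef])
        rwa [abs_of_neg (by linarith), neg_sub] at h
      have he0 : 0 ≤ e := (fu u z).2.1
      have he1 : e ≤ 1 := (fu u z).2.2
      have hm' : max (e - δ/2) 0 < min (e + δ/2) 1 :=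
        max_lt (lt_min (by linarith) (by linarith)) (lt_min (by linarith) one_pos)
      have hzF' : z ∈ Fcd u (e - δ/2) (e + δ/2) :=
        subset_closure (show z ∈ fu u ⁻¹' Jset (e - δ/2) (e + δ/2) from
          ⟨by linarith, by linarith⟩)
      obtain ⟨y, hyC, hyE⟩ := IH γ (Order.lt_succ γ) (e - δ/2) (e + δ/2) hm' z hzY hzF'
      set C := connectedComponentIn (Xseq u γ ∩ Fcd u (e - δ/2) (e + δ/2)) z with hC
      have hCsub : C ⊆ Xseq u γ ∩ Fcd u (e - δ/2) (e + δ/2) := connectedComponentIn_subset _ _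
      have hCVW : C ⊆ V ∪ W := by
        intro w hw
        have hwY : w ∈ Y := (hCsub hw).1
        have hwF' : w ∈ Fcd u (e - δ/2) (e + δ/2) := (hCsub hw).2
        have hwband := Fcd_band u hwF'
        have hwF : w ∈ Fcd u c d := Fcd_mono u (by linarith) (by linarith) hwF'
        rcases hcover w ⟨hwY, hwF⟩ with h | ⟨t, htT, hrel⟩
        · exact h
        · exfalso
          have hwt : fu u w = t := (relInt_subset_right _ _ hrel).2
          have h1 : δ ≤ |e - (t : ℝ)| := by
            apply hδle (t : ℝ)
            simp only [hSdef, Finset.mem_insert, Finset.mem_image]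
            exact Or.inr (Or.inr ⟨t, htT, rfl⟩)
          have h2 : |e - (t : ℝ)| ≤ δ/2 := by
            rw [abs_le, ← hwt]
            constructor
            · linarith [hwband.2]
            · linarith [hwband.1]
          linarith
      have hCpre : IsPreconnected C := isPreconnected_connectedComponentIn
      obtain ⟨p, _, hpV, hpW⟩ := hCpre V W hVo hWo hCVW
        ⟨z, mem_connectedComponentIn ⟨hzY, hzF'⟩, hzV⟩ ⟨y, hyC, hEW hyE⟩
      exact Set.disjoint_left.mp hVW hpV hpW
    have hxnotrel : x ∉ relInt Y (Y ∩ fu u ⁻¹' {τ}) := by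
      have hxX' := hxX
      rw [Xseq_succ] at hxX'
      intro h
      exact hxX'.2 (mem_iUnion.mpr ⟨τ, h⟩)
    have happrox := approx_of_mem_succ u hxY hxnotrel
    rcases happrox with hbr | hbr
    · -- approached from below
      set O := V ∩ (Y ∩ fu u ⁻¹' (Set.Iio τ)) with hO
      have hxclO : x ∈ closure O := by
        rw [mem_closure_iff] at hbr ⊢
        intro o ho hxo
        obtain ⟨w, ⟨hwo, hwV⟩, hwS⟩ := hbr (o ∩ V) (ho.inter hVo) ⟨hxo, hxV⟩
        exact ⟨w, hwo, hwV, hwS⟩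
      have hbad : ∀ z ∈ O, fu u z ∈ T ∨ ((fu u z : ℝ) = c ∨ (fu u z : ℝ) < c) := by
        intro z hz
        by_cases hT1 : fu u z ∈ T
        · exact Or.inl hT1
        rcases lt_trichotomy ((fu u z : ℝ)) c with h | h | h
        · exact Or.inr (Or.inr h)
        · exact Or.inr (Or.inl h)
        · exfalso
          have hzlt : (fu u z : ℝ) < (τ : ℝ) := Subtype.coe_lt_coe.mpr hz.2.2
          exact key z hz.1 hz.2.1 hT1 h (by linarith [hband.2])
      have hOsub : O ⊆ (⋃ t ∈ T, O ∩ fu u ⁻¹' {t}) ∪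
          ((O ∩ {z : Su u | (fu u z : ℝ) = c}) ∪ (O ∩ {z : Su u | (fu u z : ℝ) < c})) := by
        intro z hz
        rcases hbad z hz with h | h | h
        · exact Or.inl (mem_iUnion₂.mpr ⟨fu u z, h, hz, rfl⟩)
        · exact Or.inr (Or.inl ⟨hz, h⟩)
        · exact Or.inr (Or.inr ⟨hz, h⟩)
      have hxcl2 := closure_mono hOsub hxclO
      rw [closure_union, closure_union, Finset.closure_biUnion] at hxcl2
      rcases hxcl2 with h | h | h
      · obtain ⟨t, htT, hxt⟩ := mem_iUnion₂.mp h
        have hne : (O ∩ fu u ⁻¹' {t}).Nonempty := by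
          rcases (O ∩ fu u ⁻¹' {t}).eq_empty_or_nonempty with hemp | hne
          · rw [hemp, closure_empty] at hxt
            exact absurd hxt (notMem_empty x)
          · exact hne
        have hxτt : τ = t := by
          have hmem : x ∈ fu u ⁻¹' {t} :=
            closure_minimal inter_subset_right
              (isClosed_singleton.preimage (continuous_fu u)) hxt
          exact hmem
        obtain ⟨z, hzO, hzt⟩ := hne
        have hlt : fu u z < τ := hzO.2.2
        rw [hxτt, show fu u z = t from hzt] at hlt
        exact lt_irrefl t hlt
      · have hclosed : IsClosed {z : Su u | (fu u z : ℝ) = c} := by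
          rw [show {z : Su u | (fu u z : ℝ) = c} = (fun z => (fu u z : ℝ)) ⁻¹' {c} from rfl]
          exact isClosed_singleton.preimage (continuous_fuR u)
        have hne : (O ∩ {z : Su u | (fu u z : ℝ) = c}).Nonempty := by
          rcases (O ∩ {z : Su u | (fu u z : ℝ) = c}).eq_empty_or_nonempty with hemp | hne
          · rw [hemp, closure_empty] at h
            exact absurd h (notMem_empty x)
          · exact hne
        have hxc : (τ : ℝ) = c := closure_minimal inter_subset_right hclosed h
        obtain ⟨z, hzO, hzc⟩ := hne
        have hzc' : (fu u z : ℝ) = c := hzc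
        have hxc' : (τ : ℝ) = c := hxc
        have h1 : fu u z = τ := Subtype.coe_injective (hzc'.trans hxc'.symm)
        have h2 : fu u z < τ := hzO.2.2
        rw [h1] at h2
        exact lt_irrefl τ h2
      · have hsub1 : O ∩ {z : Su u | (fu u z : ℝ) < c} ⊆
            fu u ⁻¹' {t : unitInterval | (t : ℝ) < c} := fun z hz => hz.2
        have hxU1 : x ∈ closure (fu u ⁻¹' {t : unitInterval | (t : ℝ) < c}) :=
          closure_mono hsub1 h
        have hdisjcl := hFsp _ _ (isOpen_lt_pre u c) (isOpen_Jset_pre u c d)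
          (isFSigma_lt_pre u c) (isFSigma_Jset_pre u c d)
          (by
            rw [Set.disjoint_left]
            rintro z hz1 hz2
            exact absurd hz2.1 (not_lt.mpr hz1.le))
        exact Set.disjoint_left.mp hdisjcl hxU1 hxF
    · -- approached from above
      set O := V ∩ (Y ∩ fu u ⁻¹' (Set.Ioi τ)) with hO
      have hxclO : x ∈ closure O := by
        rw [mem_closure_iff] at hbr ⊢
        intro o ho hxo
        obtain ⟨w, ⟨hwo, hwV⟩, hwS⟩ := hbr (o ∩ V) (ho.inter hVo) ⟨hxo, hxV⟩
        exact ⟨w, hwo, hwV, hwS⟩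
      have hbad : ∀ z ∈ O, fu u z ∈ T ∨ ((fu u z : ℝ) = d ∨ d < (fu u z : ℝ)) := by
        intro z hz
        by_cases hT1 : fu u z ∈ T
        · exact Or.inl hT1
        rcases lt_trichotomy ((fu u z : ℝ)) d with h | h | h
        · exfalso
          have hzgt : (τ : ℝ) < (fu u z : ℝ) := Subtype.coe_lt_coe.mpr hz.2.2
          exact key z hz.1 hz.2.1 hT1 (by linarith [hband.1]) h
        · exact Or.inr (Or.inl h)
        · exact Or.inr (Or.inr h)
      have hOsub : O ⊆ (⋃ t ∈ T, O ∩ fu u ⁻¹' {t}) ∪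
          ((O ∩ {z : Su u | (fu u z : ℝ) = d}) ∪ (O ∩ {z : Su u | d < (fu u z : ℝ)})) := by
        intro z hz
        rcases hbad z hz with h | h | h
        · exact Or.inl (mem_iUnion₂.mpr ⟨fu u z, h, hz, rfl⟩)
        · exact Or.inr (Or.inl ⟨hz, h⟩)
        · exact Or.inr (Or.inr ⟨hz, h⟩)
      have hxcl2 := closure_mono hOsub hxclO
      rw [closure_union, closure_union, Finset.closure_biUnion] at hxcl2
      rcases hxcl2 with h | h | h
      · obtain ⟨t, htT, hxt⟩ := mem_iUnion₂.mp h
        have hne : (O ∩ fu u ⁻¹' {t}).Nonempty := by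
          rcases (O ∩ fu u ⁻¹' {t}).eq_empty_or_nonempty with hemp | hne
          · rw [hemp, closure_empty] at hxt
            exact absurd hxt (notMem_empty x)
          · exact hne
        have hxτt : τ = t := by
          have hmem : x ∈ fu u ⁻¹' {t} :=
            closure_minimal inter_subset_right
              (isClosed_singleton.preimage (continuous_fu u)) hxt
          exact hmem
        obtain ⟨z, hzO, hzt⟩ := hne
        have hlt : τ < fu u z := hzO.2.2
        rw [hxτt, show fu u z = t from hzt] at hlt
        exact lt_irrefl t hlt
      · have hclosed : IsClosed {z : Su u | (fu u z : ℝ) = d} := by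
          rw [show {z : Su u | (fu u z : ℝ) = d} = (fun z => (fu u z : ℝ)) ⁻¹' {d} from rfl]
          exact isClosed_singleton.preimage (continuous_fuR u)
        have hne : (O ∩ {z : Su u | (fu u z : ℝ) = d}).Nonempty := by
          rcases (O ∩ {z : Su u | (fu u z : ℝ) = d}).eq_empty_or_nonempty with hemp | hne
          · rw [hemp, closure_empty] at h
            exact absurd h (notMem_empty x)
          · exact hne
        have hxd : (τ : ℝ) = d := closure_minimal inter_subset_right hclosed h
        obtain ⟨z, hzO, hzd⟩ := hne
        have hzd' : (fu u z : ℝ) = d := hzd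
        have hxd' : (τ : ℝ) = d := hxd
        have h1 : fu u z = τ := Subtype.coe_injective (hzd'.trans hxd'.symm)
        have h2 : τ < fu u z := hzO.2.2
        rw [h1] at h2
        exact lt_irrefl τ h2
      · have hsub1 : O ∩ {z : Su u | d < (fu u z : ℝ)} ⊆
            fu u ⁻¹' {t : unitInterval | d < (t : ℝ)} := fun z hz => hz.2
        have hxU1 : x ∈ closure (fu u ⁻¹' {t : unitInterval | d < (t : ℝ)}) :=
          closure_mono hsub1 h
        have hdisjcl := hFsp _ _ (isOpen_gt_pre u d) (isOpen_Jset_pre u c d)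
          (isFSigma_gt_pre u d) (isFSigma_Jset_pre u c d)
          (by
            rw [Set.disjoint_left]
            rintro z hz1 hz2
            exact absurd hz2.2 (not_lt.mpr hz1.le))
        exact Set.disjoint_left.mp hdisjcl hxU1 hxF
  · -- limit case
    haveI : Nonempty {β : Ordinal // β < α} := ⟨⟨0, hlim.pos⟩⟩
    set F := Fcd u c d with hF
    set G : {β : Ordinal // β < α} → Set (Su u) := fun i => Xseq u i.1 ∩ F with hG
    set C : {β : Ordinal // β < α} → Set (Su u) :=
      fun i => connectedComponentIn (G i) x with hCdef
    have hxG : ∀ i, x ∈ G i := fun i => ⟨Xseq_antitone u α i.1 i.2.le hxX, hxF⟩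
    have hGcl : ∀ i, IsClosed (G i) :=
      fun i => (Xseq_closed u hcomp i.1).inter (isClosed_Fcd u c d)
    have hCcl : ∀ i, IsClosed (C i) := fun i => isClosed_ccIn (hGcl i).isCompact x
    have hCpre : ∀ i, IsPreconnected (C i) := fun i => isPreconnected_connectedComponentIn
    have hdir : ∀ i j, ∃ k, C k ⊆ C i ∧ C k ⊆ C j := by
      intro i j
      rcases le_total i.1 j.1 with h | h
      · exact ⟨j, connectedComponentIn_mono x
          (inter_subset_inter_left F (Xseq_antitone u j.1 i.1 h)), subset_rfl⟩
      · exact ⟨i, subset_rfl, connectedComponentIn_mono x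
          (inter_subset_inter_left F (Xseq_antitone u i.1 j.1 h))⟩
    have hCE : ∀ i, (C i ∩ E).Nonempty :=
      fun i => IH i.1 i.2 c d hm x (Xseq_antitone u α i.1 i.2.le hxX) hxF
    obtain ⟨y, hy⟩ := IsCompact.nonempty_iInter_of_directed_nonempty_isCompact_isClosed
      (fun i => C i ∩ E)
      (fun i j => by
        obtain ⟨k, hk1, hk2⟩ := hdir i j
        exact ⟨k, inter_subset_inter_left E hk1, inter_subset_inter_left E hk2⟩)
      hCE
      (fun i => ((hCcl i).inter hEc).isCompact)
      (fun i => (hCcl i).inter hEc)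
    rw [mem_iInter] at hy
    have hyC : y ∈ ⋂ i, C i := mem_iInter.mpr fun i => (hy i).1
    have hyE : y ∈ E := (hy (Classical.arbitrary _)).2
    have hpre : IsPreconnected (⋂ i, C i) :=
      isPreconnected_iInter_of_directed hdir hCcl hCpre
    have hxiC : x ∈ ⋂ i, C i := mem_iInter.mpr fun i => mem_connectedComponentIn (hxG i)
    have hsub : (⋂ i, C i) ⊆ Xseq u α ∩ F := by
      intro w hw
      rw [mem_iInter] at hw
      constructor
      · rw [Xseq_limit u hlim, mem_iInter]
        intro β
        exact ((connectedComponentIn_subset (G β) x) (hw β)).1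
      · exact ((connectedComponentIn_subset (G (Classical.arbitrary _)) x) (hw _)).2
    have hfin := hpre.subset_connectedComponentIn hxiC hsub
    exact ⟨y, hfin hyC, hyE⟩

end MainLemma
/-- For every ordinal `α`, every connected component of `X_α` meets both the bottom
line `B_u` and the top line `T_u`. -/
theorem components_meet_bottom_top (u : StoneCech ℕ)
    (hu : ∀ n : ℕ, u ≠ stoneCechUnit n)
    (hne : (Su u).Nonempty) (hcomp : IsCompact (Su u)) (hconn : IsConnected (Su u))
    (hFsp : IsFSpace (Su u))
    (hP : ∀ s r : unitInterval, s < r → IsConnected (Pset u s r)) :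
    ∀ α : Ordinal, ∀ x ∈ Xseq u α,
      (connectedComponentIn (Xseq u α) x ∩ Bu u).Nonempty ∧
      (connectedComponentIn (Xseq u α) x ∩ Tu u).Nonempty := by
  intro α x hx
  have hFuniv : Fcd u (-1) 2 = univ := by
    have hJ : Jset (-1 : ℝ) 2 = univ := by
      ext t
      simp only [Jset, Set.mem_setOf_eq, Set.mem_univ, iff_true]
      constructor
      · linarith [t.2.1]
      · linarith [t.2.2]
    rw [Fcd, hJ, preimage_univ, closure_univ]
  have hm : max (-1 : ℝ) 0 < min 2 1 := by norm_num
  have hxF : x ∈ Fcd u (-1) 2 := by rw [hFuniv]; exact mem_univ x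
  constructor
  · have hmain := main_lemma u hcomp hFsp hP (Bu u)
      (isClosed_closure.preimage continuous_subtype_val)
      (fun a b hab => Pset_inter_edge_nonempty u a b hab 0)
      α (-1) 2 hm x hx hxF
    rwa [hFuniv, inter_univ] at hmain
  · have hmain := main_lemma u hcomp hFsp hP (Tu u)
      (isClosed_closure.preimage continuous_subtype_val)
      (fun a b hab => Pset_inter_edge_nonempty u a b hab 1)
      α (-1) 2 hm x hx hxF
    rwa [hFuniv, inter_univ] at hmain

end
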